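/- arXiv:1806.07001 — 2 statements merged into one kernel-verified Lean document; each statement's English description precedes it below -/
import Mathlib

section
/- Let μ, ν be Borel probability measures on ℝ^d with finite first moments, G : ℝ^d → ℝ^d an M_G-Lipschitz map, and μ̂, ν̂ empirical-type probability measures with finite first moments. Suppose D(G_*μ, ν) ≤ η + ε_cl for constants η, ε_cl ≥ 0, and suppose ε_cl − ε_adv + η < D(ν, ν̂) − M_G · D(μ, μ̂). Then D(G_*μ̂, ν) − D(ν̂, ν) < ε_adv, where D(ρ, σ) := ∫∫ ‖x − y‖ dρ(x) dσ(y). -/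
open MeasureTheory

noncomputable def Dlk {d : ℕ} (ρ σ : Measure (EuclideanSpace ℝ (Fin d))) : ℝ :=
  ∫ y, ∫ x, ‖x - y‖ ∂ρ ∂σ

section Aux

variable {d : ℕ}

local notation "E" => EuclideanSpace ℝ (Fin d)

/-- Average distance from `x` to a sample of `σ`. -/
noncomputable def favg (σ : Measure E) (x : E) : ℝ := ∫ x', ‖x - x'‖ ∂σ

/-- Integrability of `x' ↦ ‖F x' - y‖` under a measure with finite first moment of `‖F ·‖`. -/
lemma int_sub_gen {F : E → E} (hFc : Continuous F) (ρ : Measure E) [IsProbabilityMeasure ρ]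
    (hF : Integrable (fun x => ‖F x‖) ρ) (y : E) :
    Integrable (fun x => ‖F x - y‖) ρ := by
  refine (hF.add (integrable_const ‖y‖)).mono
    ((hFc.sub continuous_const).norm.aestronglyMeasurable) ?_
  filter_upwards with x
  simp only [norm_norm]
  calc ‖F x - y‖ ≤ ‖F x‖ + ‖y‖ := norm_sub_le _ _
  _ ≤ ‖‖F x‖ + ‖y‖‖ := le_abs_self _

lemma int_sub_left (ρ : Measure E) [IsProbabilityMeasure ρ]
    (hρ : Integrable (fun x => ‖x‖) ρ) (y : E) :
    Integrable (fun x => ‖x - y‖) ρ :=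
  int_sub_gen continuous_id ρ hρ y

lemma int_sub_right (ρ : Measure E) [IsProbabilityMeasure ρ]
    (hρ : Integrable (fun x => ‖x‖) ρ) (x : E) :
    Integrable (fun y => ‖x - y‖) ρ :=
  (int_sub_left ρ hρ x).congr (Filter.Eventually.of_forall fun y => norm_sub_rev y x)

lemma favg_nonneg (σ : Measure E) (x : E) : 0 ≤ favg σ x :=
  integral_nonneg fun _ => norm_nonneg _

lemma favg_le (σ : Measure E) [IsProbabilityMeasure σ]
    (hσ : Integrable (fun x => ‖x‖) σ) (x : E) :
    favg σ x ≤ ‖x‖ + ∫ x', ‖x'‖ ∂σ := by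
  have h1 : favg σ x ≤ ∫ x', (‖x‖ + ‖x'‖) ∂σ :=
    integral_mono (int_sub_right σ hσ x) ((integrable_const ‖x‖).add hσ)
      (fun x' => norm_sub_le x x')
  rwa [integral_add (integrable_const _) hσ, integral_const, Measure.real, measure_univ,
    ENNReal.toReal_one, one_smul] at h1

lemma favg_stronglyMeasurable (σ : Measure E) [SFinite σ] :
    StronglyMeasurable (favg σ) :=
  (Continuous.stronglyMeasurable (by fun_prop :
    Continuous fun p : E × E => ‖p.1 - p.2‖)).integral_prod_right'

lemma favg_integrable (σ ρ : Measure E) [IsProbabilityMeasure σ] [IsProbabilityMeasure ρ]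
    (hσ : Integrable (fun x => ‖x‖) σ) (hρ : Integrable (fun x => ‖x‖) ρ) :
    Integrable (favg σ) ρ := by
  refine (hρ.add (integrable_const (∫ x', ‖x'‖ ∂σ))).mono
    (favg_stronglyMeasurable σ).aestronglyMeasurable ?_
  filter_upwards with x
  rw [Real.norm_of_nonneg (favg_nonneg σ x)]
  exact (favg_le σ hσ x).trans (le_abs_self _)

lemma Dlk_symm (ρ σ : Measure E) [IsProbabilityMeasure ρ] [IsProbabilityMeasure σ]
    (hρ : Integrable (fun x => ‖x‖) ρ) (hσ : Integrable (fun x => ‖x‖) σ) :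
    Dlk ρ σ = Dlk σ ρ := by
  have hmeas : AEStronglyMeasurable (fun p : E × E => ‖p.1 - p.2‖) (ρ.prod σ) :=
    (Continuous.aestronglyMeasurable (by fun_prop))
  have hint : Integrable (fun p : E × E => ‖p.1 - p.2‖) (ρ.prod σ) := by
    rw [integrable_prod_iff hmeas]
    constructor
    · filter_upwards with x
      exact int_sub_right σ hσ x
    · refine (favg_integrable σ ρ hσ hρ).congr ?_
      filter_upwards with x
      simp [favg]
  have hswap := integral_integral_swap (f := fun x y => ‖x - y‖) hint
  unfold Dlk
  rw [← hswap]
  refine integral_congr_ae (Filter.Eventually.of_forall fun x => ?_)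
  refine integral_congr_ae (Filter.Eventually.of_forall fun y => ?_)
  exact norm_sub_rev x y

end Aux

theorem stmt5 {d : ℕ} (μ ν μhat νhat : Measure (EuclideanSpace ℝ (Fin d)))
    [IsProbabilityMeasure μ] [IsProbabilityMeasure ν]
    [IsProbabilityMeasure μhat] [IsProbabilityMeasure νhat]
    (hμ : Integrable (fun x => ‖x‖) μ) (hν : Integrable (fun x => ‖x‖) ν)
    (hμhat : Integrable (fun x => ‖x‖) μhat)
    (hνhat : Integrable (fun x => ‖x‖) νhat)
    (MG : NNReal) (G : EuclideanSpace ℝ (Fin d) → EuclideanSpace ℝ (Fin d))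
    (hG : LipschitzWith MG G)
    (η εcl εadv : ℝ) (hη : 0 ≤ η) (hεcl : 0 ≤ εcl)
    (hERM : Dlk (μ.map G) ν ≤ η + εcl)
    (hcond : εcl - εadv + η < Dlk ν νhat - (MG : ℝ) * Dlk μ μhat) :
    Dlk (μhat.map G) ν - Dlk νhat ν < εadv := by
  -- basic integrability facts about G
  have hGnorm : Integrable (fun x => ‖G x‖) μ := by
    refine ((hμ.const_mul (MG : ℝ)).add (integrable_const ‖G 0‖)).mono
      hG.continuous.norm.aestronglyMeasurable ?_
    filter_upwards with x
    simp only [norm_norm]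
    have h1 : ‖G x - G 0‖ ≤ (MG : ℝ) * ‖x‖ := by
      simpa [dist_eq_norm] using hG.dist_le_mul x 0
    calc ‖G x‖ = ‖(G x - G 0) + G 0‖ := by rw [sub_add_cancel]
    _ ≤ ‖G x - G 0‖ + ‖G 0‖ := norm_add_le _ _
    _ ≤ (MG : ℝ) * ‖x‖ + ‖G 0‖ := add_le_add_left h1 _
    _ ≤ ‖(MG : ℝ) * ‖x‖ + ‖G 0‖‖ := le_abs_self _
  -- the averaged functions
  set g : EuclideanSpace ℝ (Fin d) → ℝ := fun y => ∫ x', ‖G x' - y‖ ∂μ with hg_def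
  have hg_nonneg : ∀ y, 0 ≤ g y := fun y => integral_nonneg fun _ => norm_nonneg _
  have hg_le : ∀ y : EuclideanSpace ℝ (Fin d), g y ≤ (∫ x', ‖G x'‖ ∂μ) + ‖y‖ := by
    intro y
    have h1 : g y ≤ ∫ x', (‖G x'‖ + ‖y‖) ∂μ := by
      refine integral_mono (int_sub_gen hG.continuous μ hGnorm y)
        (hGnorm.add (integrable_const ‖y‖)) (fun x' => ?_)
      calc ‖G x' - y‖ = ‖G x' - y‖ := rfl
      _ ≤ ‖G x'‖ + ‖y‖ := norm_sub_le _ _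
    rwa [integral_add hGnorm (integrable_const _), integral_const, Measure.real, measure_univ,
      ENNReal.toReal_one, one_smul] at h1
  have hg_sm : StronglyMeasurable g :=
    (Continuous.stronglyMeasurable
      (((hG.continuous.comp continuous_snd).sub continuous_fst).norm)).integral_prod_right'
  have hg_int : Integrable g ν := by
    refine ((integrable_const (∫ x', ‖G x'‖ ∂μ)).add hν).mono
      hg_sm.aestronglyMeasurable ?_
    filter_upwards with y
    rw [Real.norm_of_nonneg (hg_nonneg y)]
    exact (hg_le y).trans (le_abs_self _)
  have hf_int : Integrable (favg μ) μhat := favg_integrable μ μhat hμ hμhat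
  -- rewriting Dlk of a pushforward
  have hmap : ∀ ρ : Measure (EuclideanSpace ℝ (Fin d)),
      Dlk (ρ.map G) ν = ∫ y, ∫ x, ‖G x - y‖ ∂ρ ∂ν := by
    intro ρ
    unfold Dlk
    refine integral_congr_ae (Filter.Eventually.of_forall fun y => ?_)
    exact integral_map hG.continuous.measurable.aemeasurable
      ((continuous_id.sub continuous_const).norm.aestronglyMeasurable)
  -- key pointwise estimate
  have hkey : ∀ (x y : EuclideanSpace ℝ (Fin d)), ‖G x - y‖ ≤ (MG : ℝ) * favg μ x + g y := by
    intro x y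
    have hpt : ∀ x' : EuclideanSpace ℝ (Fin d), ‖G x - y‖ ≤ (MG : ℝ) * ‖x - x'‖ + ‖G x' - y‖ := by
      intro x'
      have h1 : ‖G x - G x'‖ ≤ (MG : ℝ) * ‖x - x'‖ := by
        simpa [dist_eq_norm] using hG.dist_le_mul x x'
      calc ‖G x - y‖ = ‖(G x - G x') + (G x' - y)‖ := by rw [sub_add_sub_cancel]
      _ ≤ ‖G x - G x'‖ + ‖G x' - y‖ := norm_add_le _ _
      _ ≤ (MG : ℝ) * ‖x - x'‖ + ‖G x' - y‖ := add_le_add_left h1 _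
    calc ‖G x - y‖ = ∫ _x' : EuclideanSpace ℝ (Fin d), ‖G x - y‖ ∂μ := by simp
    _ ≤ ∫ x', ((MG : ℝ) * ‖x - x'‖ + ‖G x' - y‖) ∂μ :=
      integral_mono (integrable_const _)
        (((int_sub_right μ hμ x).const_mul _).add (int_sub_gen hG.continuous μ hGnorm y)) hpt
    _ = (MG : ℝ) * favg μ x + g y := by
      rw [integral_add ((int_sub_right μ hμ x).const_mul _)
        (int_sub_gen hG.continuous μ hGnorm y), integral_const_mul]
      rfl
  -- inner bound
  have hH : ∀ y : EuclideanSpace ℝ (Fin d), (∫ x, ‖G x - y‖ ∂μhat) ≤ (MG : ℝ) * (∫ x, favg μ x ∂μhat) + g y := by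
    intro y
    have hint2 : Integrable (fun x => (MG : ℝ) * favg μ x + g y) μhat :=
      (hf_int.const_mul _).add (integrable_const _)
    have step1 : (∫ x, ‖G x - y‖ ∂μhat) ≤ ∫ x, ((MG : ℝ) * favg μ x + g y) ∂μhat :=
      integral_mono_of_nonneg (Filter.Eventually.of_forall fun x => norm_nonneg _)
        hint2 (Filter.Eventually.of_forall fun x => hkey x y)
    have step2 : (∫ x, ((MG : ℝ) * favg μ x + g y) ∂μhat)
        = (MG : ℝ) * (∫ x, favg μ x ∂μhat) + g y := by
      rw [integral_add (hf_int.const_mul _) (integrable_const _), integral_const_mul,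
        integral_const, Measure.real, measure_univ, ENNReal.toReal_one, one_smul]
    exact step1.trans_eq step2
  -- main chain
  have houter : Dlk (μhat.map G) ν ≤
      (MG : ℝ) * (∫ x, favg μ x ∂μhat) + Dlk (μ.map G) ν := by
    rw [hmap μhat, hmap μ]
    have hint3 : Integrable (fun y => (MG : ℝ) * (∫ x, favg μ x ∂μhat) + g y) ν :=
      (integrable_const _).add hg_int
    have step1 : (∫ y, ∫ x, ‖G x - y‖ ∂μhat ∂ν)
        ≤ ∫ y, ((MG : ℝ) * (∫ x, favg μ x ∂μhat) + g y) ∂ν :=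
      integral_mono_of_nonneg
        (Filter.Eventually.of_forall fun y => integral_nonneg fun _ => norm_nonneg _)
        hint3 (Filter.Eventually.of_forall hH)
    have step2 : (∫ y, ((MG : ℝ) * (∫ x, favg μ x ∂μhat) + g y) ∂ν)
        = (MG : ℝ) * (∫ x, favg μ x ∂μhat) + ∫ y, ∫ x, ‖G x - y‖ ∂μ ∂ν := by
      rw [integral_add (integrable_const _) hg_int, integral_const, Measure.real, measure_univ,
        ENNReal.toReal_one, one_smul]
    exact step1.trans_eq step2
  have hfD : (∫ x, favg μ x ∂μhat) = Dlk μ μhat := by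
    unfold Dlk
    refine integral_congr_ae (Filter.Eventually.of_forall fun y => ?_)
    exact integral_congr_ae (Filter.Eventually.of_forall fun x => norm_sub_rev y x)
  have hsym : Dlk ν νhat = Dlk νhat ν := Dlk_symm ν νhat hν hνhat
  have h1 : Dlk (μhat.map G) ν ≤ (MG : ℝ) * Dlk μ μhat + (η + εcl) := by
    have := houter
    rw [hfD] at this
    calc Dlk (μhat.map G) ν ≤ (MG : ℝ) * Dlk μ μhat + Dlk (μ.map G) ν := this
    _ ≤ (MG : ℝ) * Dlk μ μhat + (η + εcl) := add_le_add_right hERM _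
  linarith
end

section
/- With the same setup as the pairing lemma (disjoint charts Uᵢ, Vᵢ, inner-relatedness, G(Uᵢ) ⊆ V_{p(i)} for a permutation p, probability measures μ̃ᵢ on Uᵢ and ν̃ⱼ on Vⱼ), for every matrix A with nonnegative entries and row sums equal to K: ∑_{i,j} A^{ij} ∫_{Uᵢ}∫_{Vⱼ} d(G(s), t) dμ̃ᵢ dν̃ⱼ ≥ K ∑_i ∫_{Uᵢ}∫_{V_{p(i)}} d(G(s), t) dμ̃ᵢ dν̃_{p(i)}. -/
open MeasureTheory

theorem stmt13 {M N : Type*} [MeasurableSpace M] [MetricSpace N]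
    [MeasurableSpace N] [BorelSpace N]
    (K : ℕ) (hK : 1 ≤ K) (p : Equiv.Perm (Fin K))
    (U : Fin K → Set M) (V : Fin K → Set N)
    (hUmeas : ∀ i, MeasurableSet (U i)) (hVmeas : ∀ i, MeasurableSet (V i))
    (hUdisj : Pairwise fun i j => Disjoint (U i) (U j))
    (hVdisj : Pairwise fun i j => Disjoint (V i) (V j))
    (hinner : ∀ i j, j ≠ p i →
      ∀ x ∈ V (p i), ∀ y ∈ V (p i), ∀ z ∈ V j, dist x y ≤ dist x z)
    (G : M → N) (hGmeas : Measurable G)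
    (hmap : ∀ i, Set.MapsTo G (U i) (V (p i)))
    (μ : Fin K → Measure M) (ν : Fin K → Measure N)
    [∀ i, IsProbabilityMeasure (μ i)] [∀ j, IsProbabilityMeasure (ν j)]
    (hμsupp : ∀ i, μ i (U i) = 1) (hνsupp : ∀ j, ν j (V j) = 1)
    (hint : ∀ i j, Integrable (fun q : M × N => dist (G q.1) q.2) ((μ i).prod (ν j)))
    (A : Fin K → Fin K → ℝ) (hA : ∀ i j, 0 ≤ A i j)
    (hArow : ∀ i, ∑ j, A i j = K) :
    (K : ℝ) * ∑ i, (∫ t, ∫ s, dist (G s) t ∂(μ i) ∂(ν (p i))) ≤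
      ∑ i, ∑ j, A i j * ∫ t, ∫ s, dist (G s) t ∂(μ i) ∂(ν j) := by
  -- a.e. membership in the charts
  have haeU : ∀ i, ∀ᵐ s ∂(μ i), s ∈ U i := by
    intro i
    have : μ i (U i)ᶜ = 0 := by
      rw [measure_compl (hUmeas i) (measure_ne_top _ _), hμsupp i, measure_univ, tsub_self]
    exact (MeasureTheory.ae_iff).2 (by simpa [Set.compl_def] using this)
  have haeV : ∀ j, ∀ᵐ t ∂(ν j), t ∈ V j := by
    intro j
    have : ν j (V j)ᶜ = 0 := by
      rw [measure_compl (hVmeas j) (measure_ne_top _ _), hνsupp j, measure_univ, tsub_self]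
    exact (MeasureTheory.ae_iff).2 (by simpa [Set.compl_def] using this)
  -- every slice is integrable
  have hall : ∀ i, ∀ t : N, Integrable (fun s => dist (G s) t) (μ i) := by
    intro i t
    obtain ⟨t₀, ht₀⟩ := ((hint i i).prod_left_ae).exists
    refine (ht₀.add (integrable_const (dist t₀ t))).mono'
      (((continuous_id.dist continuous_const).measurable.comp hGmeas).aestronglyMeasurable) ?_
    filter_upwards with s
    have := dist_triangle (G s) t₀ t
    simp only [Pi.add_apply, Real.norm_eq_abs, abs_of_nonneg dist_nonneg]
    linarith
  -- the inner double-integral is integrable in t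
  have hfint : ∀ i j, Integrable (fun t => ∫ s, dist (G s) t ∂(μ i)) (ν j) :=
    fun i j => (hint i j).integral_prod_right
  -- key monotonicity
  have key : ∀ i j, (∫ t, ∫ s, dist (G s) t ∂(μ i) ∂(ν (p i))) ≤
      ∫ t, ∫ s, dist (G s) t ∂(μ i) ∂(ν j) := by
    intro i j
    by_cases hj : j = p i
    · subst hj; exact le_rfl
    have hf_le : ∀ t ∈ V (p i), ∀ t' ∈ V j,
        (∫ s, dist (G s) t ∂(μ i)) ≤ ∫ s, dist (G s) t' ∂(μ i) := by
      intro t ht t' ht'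
      refine integral_mono_ae (hall i t) (hall i t') ?_
      filter_upwards [haeU i] with s hs
      exact hinner i j hj (G s) (hmap i hs) t ht t' ht'
    have h1 : ∀ t' ∈ V j, (∫ t, ∫ s, dist (G s) t ∂(μ i) ∂(ν (p i))) ≤
        ∫ s, dist (G s) t' ∂(μ i) := by
      intro t' ht'
      calc (∫ t, ∫ s, dist (G s) t ∂(μ i) ∂(ν (p i)))
          ≤ ∫ _, (∫ s, dist (G s) t' ∂(μ i)) ∂(ν (p i)) := by
            refine integral_mono_ae (hfint i (p i)) (integrable_const _) ?_
            filter_upwards [haeV (p i)] with t ht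
            exact hf_le t ht t' ht'
        _ = ∫ s, dist (G s) t' ∂(μ i) := by simp
    calc (∫ t, ∫ s, dist (G s) t ∂(μ i) ∂(ν (p i)))
        = ∫ _, (∫ t, ∫ s, dist (G s) t ∂(μ i) ∂(ν (p i))) ∂(ν j) := by simp
      _ ≤ ∫ t', ∫ s, dist (G s) t' ∂(μ i) ∂(ν j) := by
          refine integral_mono_ae (integrable_const _) (hfint i j) ?_
          filter_upwards [haeV j] with t' ht'
          exact h1 t' ht'
  calc (K : ℝ) * ∑ i, (∫ t, ∫ s, dist (G s) t ∂(μ i) ∂(ν (p i)))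
      = ∑ i, ∑ j, A i j * ∫ t, ∫ s, dist (G s) t ∂(μ i) ∂(ν (p i)) := by
        rw [Finset.mul_sum]
        refine Finset.sum_congr rfl fun i _ => ?_
        rw [← Finset.sum_mul, hArow i]
    _ ≤ ∑ i, ∑ j, A i j * ∫ t, ∫ s, dist (G s) t ∂(μ i) ∂(ν j) := by
        refine Finset.sum_le_sum fun i _ => Finset.sum_le_sum fun j _ => ?_
        exact mul_le_mul_of_nonneg_left (key i j) (hA i j)
end
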